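/- arXiv:1401.0683 — 3 statements merged into one kernel-verified Lean document; each statement's English description precedes it below -/
import Mathlib

section
/- Let T ∈ ℕ, let N ≥ 2 be a natural number, and let B_0, …, B_T be strictly positive real numbers. Define (α̃_t)_{t=0}^{T} by the backward recursion α̃_T = B_T and, for t = T−1,…,0, α̃_t = B_t · [ (2/(N−1)) ∑_{ℓ=1}^{T−t} ((N−2)/(N−1))^{ℓ−1} α̃_{t+ℓ} + ((N−2)/(N−1))^{T−t} ]. Then α̃_0 = B_0 · ∏_{t=1}^{T} (2·B_t + N − 2)/(N−1). -/
/-- Closed-form solution of the backward recursion for `α̃`: if `α̃_T = B_T` and for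
`t < T`, `α̃_t = B_t [ (2/(N-1)) ∑_{ℓ=1}^{T-t} ((N-2)/(N-1))^{ℓ-1} α̃_{t+ℓ}
+ ((N-2)/(N-1))^{T-t} ]`, then `α̃_0 = B_0 ∏_{t=1}^T (2 B_t + N - 2)/(N-1)`. -/
theorem backward_recursion_closed_form (T N : ℕ) (hN : 2 ≤ N) (B : ℕ → ℝ)
    (hB : ∀ t ≤ T, 0 < B t) (a : ℕ → ℝ) (haT : a T = B T)
    (ha : ∀ t < T, a t =
      B t * ((2 / ((N : ℝ) - 1)) *
          ∑ ℓ ∈ Finset.Icc 1 (T - t),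
            (((N : ℝ) - 2) / ((N : ℝ) - 1)) ^ (ℓ - 1) * a (t + ℓ)
        + (((N : ℝ) - 2) / ((N : ℝ) - 1)) ^ (T - t))) :
    a 0 = B 0 * ∏ t ∈ Finset.Icc 1 T, (2 * B t + (N : ℝ) - 2) / ((N : ℝ) - 1) := by
  have hN2 : (2:ℝ) ≤ (N:ℝ) := by exact_mod_cast hN
  have hN1 : ((N:ℝ) - 1) ≠ 0 := by linarith
  set r : ℝ := ((N:ℝ)-2)/((N:ℝ)-1) with hr
  -- range form of the recursion, valid also at t = T
  have hF : ∀ t ≤ T, a t = B t * ((2/((N:ℝ)-1)) *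
      ∑ i ∈ Finset.range (T - t), r ^ i * a (t+1+i) + r ^ (T - t)) := by
    intro t ht
    rcases eq_or_lt_of_le ht with rfl | hlt
    · simp [haT]
    · have hsum : ∑ ℓ ∈ Finset.Icc 1 (T - t), r ^ (ℓ - 1) * a (t + ℓ)
          = ∑ i ∈ Finset.range (T - t), r ^ i * a (t+1+i) := by
        rw [show Finset.Icc 1 (T - t) = Finset.Ico 1 (T - t + 1) by rw [Finset.Ico_add_one_right_eq_Icc]]
        rw [Finset.sum_Ico_eq_sum_range]
        simp only [Nat.add_sub_cancel]
        refine Finset.sum_congr rfl fun i _ => ?_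
        rw [show 1 + i - 1 = i from by omega, show t + (1 + i) = t + 1 + i from by omega]
      rw [ha t hlt, hsum]
  -- one-step identity
  have key : ∀ t, t < T →
      a t = B t * ((2 * B (t+1) + (N:ℝ) - 2)/((N:ℝ)-1)) * (a (t+1) / B (t+1)) := by
    intro t ht
    have hB1 : B (t+1) ≠ 0 := ne_of_gt (hB _ (by omega))
    have hd : T - t = (T - (t+1)) + 1 := by omega
    have h1 := hF t (le_of_lt ht)
    have h2 := hF (t+1) ht
    set d := T - (t+1) with hdd
    rw [hd, Finset.sum_range_succ'] at h1
    have hS : ∑ i ∈ Finset.range d, r ^ (i+1) * a (t+1+(i+1))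
        = r * ∑ i ∈ Finset.range d, r ^ i * a (t+1+1+i) := by
      rw [Finset.mul_sum]
      refine Finset.sum_congr rfl fun i _ => ?_
      rw [show t+1+(i+1) = t+1+1+i from by omega]
      ring
    have hS' : (2/((N:ℝ)-1)) * (∑ i ∈ Finset.range d, r ^ i * a (t+1+1+i)) + r ^ d
        = a (t+1) / B (t+1) := by
      rw [h2, mul_div_cancel_left₀ _ hB1]
    have h3 : a t = B t * ((2/((N:ℝ)-1)) * a (t+1)
        + r * ((2/((N:ℝ)-1)) * (∑ i ∈ Finset.range d, r ^ i * a (t+1+1+i)) + r ^ d)) := by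
      rw [h1, hS]; ring
    rw [hS'] at h3
    rw [h3, hr]
    field_simp
    ring
  -- downward induction
  have main : ∀ d t, t + d = T →
      a t = B t * ∏ s ∈ Finset.Icc (t+1) T, (2 * B s + (N:ℝ) - 2)/((N:ℝ)-1) := by
    intro d
    induction d with
    | zero =>
      intro t ht
      have : t = T := by omega
      subst this
      rw [Finset.Icc_eq_empty (by omega), Finset.prod_empty, mul_one, haT]
    | succ d ih =>
      intro t ht
      have h1 := key t (by omega)
      have h2 := ih (t+1) (by omega)
      have hB1 : B (t+1) ≠ 0 := ne_of_gt (hB _ (by omega))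
      rw [h1, h2, mul_div_cancel_left₀ _ hB1]
      rw [show Finset.Icc (t+1) T = insert (t+1) (Finset.Icc (t+2) T) from by
        ext x; simp only [Finset.mem_Icc, Finset.mem_insert]; omega]
      rw [Finset.prod_insert (by simp only [Finset.mem_Icc]; omega)]
      ring
  exact main T 0 (by omega)
end

section
/- Let (S_n)_{n∈ℕ} be a nonnegative supermartingale with respect to a filtration on a probability space, and let p > 1 be a real number. Then E[ sup_{n∈ℕ} S_n^{1/p} ] ≤ 1 + (1/(p−1)) · E[S_0], where the expectation of the (possibly infinite) supremum is taken in [0,∞]. -/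
open MeasureTheory Set Filter
open scoped ENNReal

section Aux

/-- Maximal inequality for nonnegative supermartingales. -/
lemma supermartingale_maximal_aux {Ω : Type*} {m0 : MeasurableSpace Ω}
    {μ : Measure Ω} [IsProbabilityMeasure μ] (ℱ : Filtration ℕ m0)
    (S : ℕ → Ω → ℝ) (hS : Supermartingale S ℱ μ) (hpos : ∀ n, 0 ≤ᵐ[μ] S n)
    {a : ℝ} (ha : 0 < a) :
    ENNReal.ofReal a * μ {ω | ∃ n, a ≤ S n ω} ≤ ENNReal.ofReal (∫ ω, S 0 ω ∂μ) := by
  have hmeas : ∀ k, MeasurableSet {ω | a ≤ S k ω} := fun k =>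
    measurableSet_le measurable_const ((hS.stronglyMeasurable k).measurable.le (ℱ.le k))
  set A : ℕ → Set Ω := fun n => ⋃ k ∈ Finset.range (n + 1), {ω | a ≤ S k ω} with hA
  have hAmeas : ∀ n, MeasurableSet (A n) := fun n =>
    Finset.measurableSet_biUnion _ fun k _ => hmeas k
  have hAmono : Monotone A := by
    intro m n hmn ω hω
    simp only [hA, Set.mem_iUnion, Finset.mem_range] at hω ⊢
    obtain ⟨k, hk, h2⟩ := hω
    exact ⟨k, by omega, h2⟩
  have hU : {ω | ∃ n, a ≤ S n ω} = ⋃ n, A n := by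
    ext ω
    simp only [Set.mem_setOf_eq, Set.mem_iUnion, hA, Finset.mem_range]
    constructor
    · rintro ⟨n, hn⟩; exact ⟨n, n, Nat.lt_succ_self n, hn⟩
    · rintro ⟨n, k, _, hk⟩; exact ⟨k, hk⟩
  rw [hU, hAmono.directed_le.measure_iUnion, ENNReal.mul_iSup]
  refine iSup_le fun n => ?_
  -- hitting time
  set τ : Ω → WithTop ℕ := fun ω => (hittingBtwn S (Set.Ici a) 0 n ω : ℕ) with hτdef
  have hτ : IsStoppingTime ℱ τ := Adapted.isStoppingTime_hittingBtwn hS.stronglyAdapted.adapted measurableSet_Ici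
  have hsv_int : Integrable (stoppedValue S τ) μ :=
    integrable_stoppedValue ℕ hτ hS.integrable (N := n)
      (fun ω => WithTop.coe_le_coe.mpr (hittingBtwn_le ω))
  have hsv_nn : 0 ≤ᵐ[μ] stoppedValue S τ := by
    have h := (ae_all_iff).2 hpos
    filter_upwards [h] with ω hω
    exact hω (τ ω).untopA
  have hle : ∀ ω ∈ A n, a ≤ stoppedValue S τ ω := by
    intro ω hω
    simp only [hA, Set.mem_iUnion, Finset.mem_range] at hω
    obtain ⟨k, hk, hk2⟩ := hω
    have : stoppedValue S τ ω ∈ Set.Ici a :=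
      stoppedValue_hittingBtwn_mem ⟨k, ⟨Nat.zero_le _, Nat.lt_succ_iff.mp hk⟩, hk2⟩
    exact this
  have step1 : a * (μ (A n)).toReal ≤ ∫ ω in A n, stoppedValue S τ ω ∂μ :=
    by have h := setIntegral_ge_of_const_le (hAmeas n) (measure_ne_top _ _) hle hsv_int.integrableOn
       rw [smul_eq_mul, mul_comm] at h; exact h
  have step2 : ∫ ω in A n, stoppedValue S τ ω ∂μ ≤ ∫ ω, stoppedValue S τ ω ∂μ :=
    setIntegral_le_integral hsv_int hsv_nn
  have step3 : ∫ ω, stoppedValue S τ ω ∂μ ≤ ∫ ω, S 0 ω ∂μ := by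
    have hneg := hS.neg
    have h := hneg.expected_stoppedValue_mono (isStoppingTime_const ℱ 0) hτ
      (fun ω => WithTop.coe_le_coe.mpr (Nat.zero_le _))
      (N := n) (fun ω => WithTop.coe_le_coe.mpr (hittingBtwn_le ω))
    rw [stoppedValue_const] at h
    have h1 : stoppedValue (-S) τ = -(stoppedValue S τ) := rfl
    simp only [h1, Pi.neg_apply, integral_neg, neg_le_neg_iff] at h
    exact h
  rw [ENNReal.le_ofReal_iff_toReal_le (ENNReal.mul_ne_top ENNReal.ofReal_ne_top (measure_ne_top _ _))
    (le_trans (by positivity) (step1.trans (step2.trans step3)))]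
  rw [ENNReal.toReal_mul, ENNReal.toReal_ofReal ha.le]
  exact step1.trans (step2.trans step3)


lemma tail_rpow_integral_aux {p : ℝ} (hp : 1 < p) :
    ∫⁻ t in Ioi (1 : ℝ), ENNReal.ofReal (t ^ (-p)) = ENNReal.ofReal (1 / (p - 1)) := by
  have hint : IntegrableOn (fun t : ℝ => t ^ (-p)) (Ioi 1) :=
    integrableOn_Ioi_rpow_of_lt (by linarith) one_pos
  have hnn : 0 ≤ᵐ[volume.restrict (Ioi (1:ℝ))] fun t : ℝ => t ^ (-p) := by
    filter_upwards [ae_restrict_mem measurableSet_Ioi] with t ht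
    exact Real.rpow_nonneg (by linarith [mem_Ioi.mp ht]) _
  rw [← ofReal_integral_eq_lintegral_ofReal hint hnn]
  congr 1
  rw [integral_Ioi_rpow_of_lt (by linarith) one_pos]
  rw [Real.one_rpow]
  rw [div_eq_div_iff (by linarith) (by linarith)]
  ring

end Aux

/-- For a nonnegative supermartingale `(S_n)` and `p > 1`,
`E[sup_n S_n^{1/p}] ≤ 1 + (1/(p-1)) E[S_0]`, the expectation of the (possibly infinite)
supremum being taken in `[0,∞]`. -/
theorem supermartingale_sup_rpow_bound {Ω : Type*} {m0 : MeasurableSpace Ω}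
    {μ : Measure Ω} [IsProbabilityMeasure μ] (ℱ : Filtration ℕ m0)
    (S : ℕ → Ω → ℝ) (hS : Supermartingale S ℱ μ) (hpos : ∀ n, 0 ≤ᵐ[μ] S n)
    (p : ℝ) (hp : 1 < p) :
    ∫⁻ ω, ⨆ n, ENNReal.ofReal (S n ω ^ (1 / p)) ∂μ
      ≤ 1 + ENNReal.ofReal ((1 / (p - 1)) * ∫ ω, S 0 ω ∂μ) := by
  have hp0 : (0:ℝ) < p := by linarith
  set C := ENNReal.ofReal (∫ ω, S 0 ω ∂μ) with hC
  have hCtop : C ≠ ∞ := ENNReal.ofReal_ne_top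
  set U : Ω → ℝ≥0∞ := fun ω => ⨆ n, ENNReal.ofReal (S n ω ^ (1 / p)) with hUdef
  have hSmeas : ∀ n, Measurable (S n) := fun n =>
    (hS.stronglyMeasurable n).measurable.le (ℱ.le n)
  have hUmeas : Measurable U :=
    Measurable.iSup fun n => ENNReal.measurable_ofReal.comp ((hSmeas n).pow measurable_const)
  have hae : ∀ᵐ ω ∂μ, ∀ n, 0 ≤ S n ω := ae_all_iff.2 hpos
  -- key : exceedance of U implies exceedance of S
  have key : ∀ (b : ℝ), 0 < b → ∀ ω, (∀ n, 0 ≤ S n ω) →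
      ENNReal.ofReal (b ^ (1 / p)) < U ω → ∃ n, b ≤ S n ω := by
    intro b hb ω hω hlt
    rw [hUdef, lt_iSup_iff] at hlt
    obtain ⟨n, hn⟩ := hlt
    have h1 : b ^ (1 / p) < S n ω ^ (1 / p) := by
      by_contra h
      exact absurd (ENNReal.ofReal_le_ofReal (not_lt.mp h)) (not_le.mpr hn)
    refine ⟨n, ?_⟩
    have h2 : (b ^ (1 / p)) ^ p ≤ (S n ω ^ (1 / p)) ^ p :=
      Real.rpow_le_rpow (Real.rpow_nonneg hb.le _) h1.le hp0.le
    rwa [← Real.rpow_mul hb.le, ← Real.rpow_mul (hω n), one_div,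
      inv_mul_cancel₀ hp0.ne', Real.rpow_one, Real.rpow_one] at h2
  -- U is a.e. finite
  have hbound : ∀ k : ℕ, 0 < k → (k : ℝ≥0∞) * μ {ω | U ω = ∞} ≤ C := by
    intro k hk
    have hkR : (0:ℝ) < (k:ℝ) := by exact_mod_cast hk
    have h1 : μ {ω | U ω = ∞} ≤ μ {ω | ∃ n, (k:ℝ) ≤ S n ω} := by
      apply measure_mono_ae
      filter_upwards [hae] with ω hω hinf
      exact key _ hkR ω hω (by rw [show U ω = ⊤ from hinf]; exact ENNReal.ofReal_lt_top)
    calc (k : ℝ≥0∞) * μ {ω | U ω = ∞}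
        = ENNReal.ofReal (k:ℝ) * μ {ω | U ω = ∞} := by rw [ENNReal.ofReal_natCast]
      _ ≤ ENNReal.ofReal (k:ℝ) * μ {ω | ∃ n, (k:ℝ) ≤ S n ω} := by gcongr
      _ ≤ C := supermartingale_maximal_aux ℱ S hS hpos hkR
  have hfin0 : μ {ω | U ω = ∞} = 0 := by
    have htend : Tendsto (fun k : ℕ => C / (k : ℝ≥0∞)) atTop (nhds 0) := by
      have := ENNReal.Tendsto.const_div (a := C) ENNReal.tendsto_nat_nhds_top
        (Or.inr hCtop)
      simpa [ENNReal.div_top] using this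
    have hev : ∀ᶠ k : ℕ in atTop, μ {ω | U ω = ∞} ≤ C / (k : ℝ≥0∞) := by
      filter_upwards [eventually_gt_atTop 0] with k hk
      rw [ENNReal.le_div_iff_mul_le (Or.inl (by exact_mod_cast hk.ne'))
        (Or.inl (by simp)), mul_comm]
      exact hbound k hk
    exact le_antisymm (ge_of_tendsto htend hev) zero_le
  have hfin_ae : ∀ᵐ ω ∂μ, U ω ≠ ∞ := by
    rw [ae_iff]
    simpa using hfin0
  -- rewrite via toReal and layer cake
  set f : Ω → ℝ := fun ω => (U ω).toReal with hfdef
  have hUf : ∫⁻ ω, U ω ∂μ = ∫⁻ ω, ENNReal.ofReal (f ω) ∂μ :=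
    lintegral_congr_ae <| by
      filter_upwards [hfin_ae] with ω h
      exact (ENNReal.ofReal_toReal h).symm
  have hlc : ∫⁻ ω, ENNReal.ofReal (f ω) ∂μ = ∫⁻ t in Ioi 0, μ {a | t < f a} :=
    lintegral_eq_lintegral_meas_lt μ (ae_of_all _ fun ω => ENNReal.toReal_nonneg)
      hUmeas.ennreal_toReal.aemeasurable
  show ∫⁻ ω, U ω ∂μ ≤ _
  rw [hUf, hlc, ← Ioc_union_Ioi_eq_Ioi (zero_le_one (α := ℝ)),
    lintegral_union measurableSet_Ioi (Ioc_disjoint_Ioi le_rfl)]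
  have part1 : ∫⁻ t in Ioc (0:ℝ) 1, μ {a | t < f a} ≤ 1 := by
    calc ∫⁻ t in Ioc (0:ℝ) 1, μ {a | t < f a}
        ≤ ∫⁻ _ in Ioc (0:ℝ) 1, 1 := lintegral_mono fun t => prob_le_one
      _ = volume (Ioc (0:ℝ) 1) := setLIntegral_one _
      _ = 1 := by simp [Real.volume_Ioc]
  have part2 : ∫⁻ t in Ioi (1:ℝ), μ {a | t < f a}
      ≤ ENNReal.ofReal ((1 / (p - 1)) * ∫ ω, S 0 ω ∂μ) := by
    have hpt : ∀ t ∈ Ioi (1:ℝ), μ {a | t < f a} ≤ C * ENNReal.ofReal (t ^ (-p)) := by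
      intro t ht
      rw [mem_Ioi] at ht
      have ht0 : (0:ℝ) < t := lt_trans zero_lt_one ht
      have htp : (0:ℝ) < t ^ p := Real.rpow_pos_of_pos ht0 _
      have h1 : μ {a | t < f a} ≤ μ {ω | ∃ n, t ^ p ≤ S n ω} := by
        apply measure_mono_ae
        filter_upwards [hae, hfin_ae] with ω hω hfinω hlt
        apply key (t ^ p) htp ω hω
        have : (t ^ p) ^ (1 / p) = t := by
          rw [← Real.rpow_mul ht0.le, mul_one_div, div_self hp0.ne', Real.rpow_one]
        rw [this]
        exact (ENNReal.ofReal_lt_iff_lt_toReal ht0.le hfinω).mpr hlt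
      have h2 : μ {ω | ∃ n, t ^ p ≤ S n ω} ≤ C * ENNReal.ofReal (t ^ (-p)) := by
        have haux := supermartingale_maximal_aux ℱ S hS hpos htp
        rw [Real.rpow_neg ht0.le, ENNReal.ofReal_inv_of_pos htp, ← div_eq_mul_inv]
        exact (ENNReal.le_div_iff_mul_le (Or.inl (ENNReal.ofReal_pos.mpr htp).ne')
          (Or.inl ENNReal.ofReal_ne_top)).mpr (by rw [mul_comm]; exact haux)
      exact h1.trans h2
    calc ∫⁻ t in Ioi (1:ℝ), μ {a | t < f a}
        ≤ ∫⁻ t in Ioi (1:ℝ), C * ENNReal.ofReal (t ^ (-p)) :=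
          setLIntegral_mono (measurable_const.mul
            (ENNReal.measurable_ofReal.comp (measurable_id.pow measurable_const))) hpt
      _ = C * ∫⁻ t in Ioi (1:ℝ), ENNReal.ofReal (t ^ (-p)) :=
          lintegral_const_mul' _ _ hCtop
      _ = C * ENNReal.ofReal (1 / (p - 1)) := by rw [tail_rpow_integral_aux hp]
      _ = ENNReal.ofReal ((1 / (p - 1)) * ∫ ω, S 0 ω ∂μ) := by
          rw [ENNReal.ofReal_mul (le_of_lt (div_pos one_pos (by linarith : (0:ℝ) < p - 1))), hC, mul_comm]
  exact add_le_add part1 part2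
end

section
/- Let α ∈ (0,1) and γ ∈ (0,1) satisfy γ·α/(1−α) < 1, and let β > 0. Let U be a standard Gaussian random variable. Then there exist constants D < ∞ and δ > 0 such that for all x ∈ ℝ, E[ ( (β²·e^{x}·U² ∨ 1) / (β^{γ}·e^{γx/2}·|U|^{γ}) )^{α/(1−α)} ] ≤ D·exp(δ·|x|). -/
set_option maxHeartbeats 1000000

open MeasureTheory ProbabilityTheory Real

lemma integrable_abs_rpow_mul_exp_neg_mul_sq {b s : ℝ} (hb : 0 < b) (hs : -1 < s) :
    Integrable fun x : ℝ => |x| ^ s * Real.exp (-b * x ^ 2) := by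
  have hI : IntegrableOn (fun x : ℝ => |x| ^ s * Real.exp (-b * x ^ 2)) (Set.Ioi 0) := by
    refine (integrableOn_rpow_mul_exp_neg_mul_sq hb hs).congr_fun (fun x hx => ?_)
      measurableSet_Ioi
    rw [abs_of_pos hx]
  rw [← integrableOn_univ, ← Set.Iio_union_Ici (a := (0 : ℝ)), integrableOn_union,
    integrableOn_Ici_iff_integrableOn_Ioi]
  refine ⟨?_, hI⟩
  rw [← (Measure.measurePreserving_neg (volume : Measure ℝ)).integrableOn_comp_preimage
      (Homeomorph.neg ℝ).measurableEmbedding]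
  simp only [Function.comp_def, abs_neg, neg_sq, Set.neg_preimage, Set.neg_Iio, neg_neg, neg_zero]
  exact hI

lemma integrable_abs_rpow_gaussian {s : ℝ} (hs : -1 < s) :
    Integrable (fun u : ℝ => |u| ^ s) (gaussianReal 0 1) := by
  rw [gaussianReal_of_var_ne_zero _ one_ne_zero,
    integrable_withDensity_iff (measurable_gaussianPDF _ _)
      (Filter.Eventually.of_forall fun x => ENNReal.ofReal_lt_top)]
  have h1 : Integrable
      (fun x : ℝ => (Real.sqrt (2 * π))⁻¹ * (|x| ^ s * Real.exp (-(2⁻¹ : ℝ) * x ^ 2))) :=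
    (integrable_abs_rpow_mul_exp_neg_mul_sq (by norm_num) hs).const_mul _
  refine h1.congr (Filter.Eventually.of_forall fun x => ?_)
  simp only [gaussianPDF]
  rw [ENNReal.toReal_ofReal (gaussianPDFReal_nonneg _ _ _)]
  simp only [gaussianPDFReal]
  push_cast
  ring_nf

/-- In the stochastic volatility model, with `α, γ ∈ (0,1)`, `γα/(1-α) < 1`, `β > 0` and
`U` standard Gaussian, there exist `D < ∞` and `δ > 0` such that for all `x`,
`E[((β² e^x U² ∨ 1)/(β^γ e^{γx/2} |U|^γ))^{α/(1-α)}] ≤ D exp(δ|x|)`. -/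
theorem sv_test_function_moment_bound (α γ β : ℝ)
    (hα : α ∈ Set.Ioo (0 : ℝ) 1) (hγ : γ ∈ Set.Ioo (0 : ℝ) 1)
    (hγα : γ * α / (1 - α) < 1) (hβ : 0 < β) :
    ∃ (D δ : ℝ), 0 < δ ∧ ∀ x : ℝ,
      ∫ u, ((max (β ^ 2 * Real.exp x * u ^ 2) 1) /
              (β ^ γ * Real.exp (γ * x / 2) * |u| ^ γ)) ^ (α / (1 - α))
          ∂(gaussianReal 0 1)
        ≤ D * Real.exp (δ * |x|) := by
  obtain ⟨hα0, hα1⟩ := hα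
  obtain ⟨hγ0, hγ1⟩ := hγ
  set p : ℝ := α / (1 - α) with hp_def
  have h1α : (0 : ℝ) < 1 - α := by linarith
  have hp : 0 < p := div_pos hα0 h1α
  have hγp : γ * p < 1 := by rw [hp_def, ← mul_div_assoc]; exact hγα
  have hs1 : (-1 : ℝ) < (2 - γ) * p := by nlinarith
  have hs2 : (-1 : ℝ) < -(γ * p) := by linarith
  have hint : Integrable (fun u : ℝ => |u| ^ ((2 - γ) * p) + |u| ^ (-(γ * p)))
      (gaussianReal 0 1) :=
    (integrable_abs_rpow_gaussian hs1).add (integrable_abs_rpow_gaussian hs2)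
  have hβγ : (0 : ℝ) < β ^ γ := Real.rpow_pos_of_pos hβ γ
  set C0 : ℝ := 2 * (β ^ 2 + 1) / β ^ γ with hC0_def
  have hC0 : 0 < C0 := div_pos (by positivity) hβγ
  set h : ℝ → ℝ := fun u => C0 ^ p * (|u| ^ ((2 - γ) * p) + |u| ^ (-(γ * p))) with hh_def
  have hinth : Integrable h (gaussianReal 0 1) := hint.const_mul _
  refine ⟨∫ u, h u ∂(gaussianReal 0 1), 3 * p / 2, by positivity, fun x => ?_⟩
  have key : ∀ u : ℝ,
      ((max (β ^ 2 * Real.exp x * u ^ 2) 1) /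
        (β ^ γ * Real.exp (γ * x / 2) * |u| ^ γ)) ^ p
      ≤ h u * Real.exp (3 * p / 2 * |x|) := by
    intro u
    have hhu : 0 ≤ h u := by
      rw [hh_def]
      positivity
    rcases eq_or_ne u 0 with rfl | hu
    · simp only [abs_zero]
      rw [Real.zero_rpow (ne_of_gt hγ0), mul_zero, div_zero, Real.zero_rpow (ne_of_gt hp)]
      positivity
    · have hu0 : 0 < |u| := abs_pos.mpr hu
      have huγ : 0 < |u| ^ γ := Real.rpow_pos_of_pos hu0 γ
      have hex : Real.exp x ≤ Real.exp |x| := Real.exp_le_exp.mpr (le_abs_self x)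
      have he1 : (1 : ℝ) ≤ Real.exp |x| := by
        rw [← Real.exp_zero]; exact Real.exp_le_exp.mpr (abs_nonneg x)
      have hnum : max (β ^ 2 * Real.exp x * u ^ 2) 1 ≤ (β ^ 2 * u ^ 2 + 1) * Real.exp |x| := by
        refine max_le ?_ ?_
        · nlinarith [sq_nonneg u, sq_nonneg β, mul_nonneg (sq_nonneg β) (sq_nonneg u)]
        · nlinarith [mul_nonneg (sq_nonneg β) (sq_nonneg u)]
      have hden : β ^ γ * |u| ^ γ * Real.exp (-(|x| / 2))
          ≤ β ^ γ * Real.exp (γ * x / 2) * |u| ^ γ := by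
        have hle : -(|x| / 2) ≤ γ * x / 2 := by
          rcases abs_cases x with ⟨h1, h2⟩ | ⟨h1, h2⟩ <;> nlinarith
        calc β ^ γ * |u| ^ γ * Real.exp (-(|x| / 2))
            ≤ β ^ γ * |u| ^ γ * Real.exp (γ * x / 2) :=
              mul_le_mul_of_nonneg_left (Real.exp_le_exp.mpr hle) (by positivity)
          _ = β ^ γ * Real.exp (γ * x / 2) * |u| ^ γ := by ring
      have hstep1 : (max (β ^ 2 * Real.exp x * u ^ 2) 1) /
          (β ^ γ * Real.exp (γ * x / 2) * |u| ^ γ)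
          ≤ ((β ^ 2 * u ^ 2 + 1) / (β ^ γ * |u| ^ γ)) * Real.exp (3 * |x| / 2) := by
        have hd : 0 < β ^ γ * |u| ^ γ * Real.exp (-(|x| / 2)) := by positivity
        calc (max (β ^ 2 * Real.exp x * u ^ 2) 1) /
            (β ^ γ * Real.exp (γ * x / 2) * |u| ^ γ)
            ≤ ((β ^ 2 * u ^ 2 + 1) * Real.exp |x|) /
              (β ^ γ * |u| ^ γ * Real.exp (-(|x| / 2))) :=
              div_le_div₀ (by positivity) hnum hd hden
          _ = ((β ^ 2 * u ^ 2 + 1) / (β ^ γ * |u| ^ γ)) *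
              (Real.exp |x| / Real.exp (-(|x| / 2))) := by
              rw [div_mul_div_comm]
          _ = ((β ^ 2 * u ^ 2 + 1) / (β ^ γ * |u| ^ γ)) * Real.exp (3 * |x| / 2) := by
              rw [← Real.exp_sub]
              congr 1
              ring
      have hB : (β ^ 2 * u ^ 2 + 1) / (β ^ γ * |u| ^ γ)
          ≤ C0 * max (|u| ^ ((2 : ℝ) - γ)) (|u| ^ (-γ)) := by
        have hmax : β ^ 2 * u ^ 2 + 1 ≤ 2 * (β ^ 2 + 1) * max (u ^ 2) 1 := by
          rcases le_total (u ^ 2) 1 with hle | hle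
          · rw [max_eq_right hle]; nlinarith [sq_nonneg β, sq_nonneg u]
          · rw [max_eq_left hle]; nlinarith [sq_nonneg β, sq_nonneg u]
        have heq : (2 * (β ^ 2 + 1) * max (u ^ 2) 1) / (β ^ γ * |u| ^ γ)
            = C0 * max (|u| ^ ((2 : ℝ) - γ)) (|u| ^ (-γ)) := by
          have e1 : |u| ^ ((2 : ℝ) - γ) = u ^ 2 / |u| ^ γ := by
            rw [Real.rpow_sub hu0]
            norm_num [Real.rpow_two, sq_abs]
          have e2 : |u| ^ (-γ) = 1 / |u| ^ γ := by
            rw [Real.rpow_neg (abs_nonneg u), one_div]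
          rw [e1, e2, max_div_div_right huγ.le, hC0_def, div_mul_div_comm]
        calc (β ^ 2 * u ^ 2 + 1) / (β ^ γ * |u| ^ γ)
            ≤ (2 * (β ^ 2 + 1) * max (u ^ 2) 1) / (β ^ γ * |u| ^ γ) :=
              div_le_div_of_nonneg_right hmax (by positivity) |>.trans_eq rfl
          _ = C0 * max (|u| ^ ((2 : ℝ) - γ)) (|u| ^ (-γ)) := heq
      have hratio : (max (β ^ 2 * Real.exp x * u ^ 2) 1) /
          (β ^ γ * Real.exp (γ * x / 2) * |u| ^ γ)
          ≤ C0 * max (|u| ^ ((2 : ℝ) - γ)) (|u| ^ (-γ)) * Real.exp (3 * |x| / 2) :=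
        hstep1.trans (mul_le_mul_of_nonneg_right hB (Real.exp_pos _).le)
      have hM : 0 ≤ max (|u| ^ ((2 : ℝ) - γ)) (|u| ^ (-γ)) :=
        le_trans (Real.rpow_nonneg (abs_nonneg u) _) (le_max_left _ _)
      have hratio0 : 0 ≤ (max (β ^ 2 * Real.exp x * u ^ 2) 1) /
          (β ^ γ * Real.exp (γ * x / 2) * |u| ^ γ) := by positivity
      calc ((max (β ^ 2 * Real.exp x * u ^ 2) 1) /
            (β ^ γ * Real.exp (γ * x / 2) * |u| ^ γ)) ^ p
          ≤ (C0 * max (|u| ^ ((2 : ℝ) - γ)) (|u| ^ (-γ)) * Real.exp (3 * |x| / 2)) ^ p :=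
            Real.rpow_le_rpow hratio0 hratio hp.le
        _ = C0 ^ p * (max (|u| ^ ((2 : ℝ) - γ)) (|u| ^ (-γ))) ^ p *
            (Real.exp (3 * |x| / 2)) ^ p := by
            rw [Real.mul_rpow (by positivity) (Real.exp_pos _).le,
              Real.mul_rpow hC0.le hM]
        _ ≤ h u * Real.exp (3 * p / 2 * |x|) := by
            rw [← Real.exp_mul]
            have hMp : (max (|u| ^ ((2 : ℝ) - γ)) (|u| ^ (-γ))) ^ p
                ≤ |u| ^ ((2 - γ) * p) + |u| ^ (-(γ * p)) := by
              have e1 : (|u| ^ ((2 : ℝ) - γ)) ^ p = |u| ^ ((2 - γ) * p) :=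
                (Real.rpow_mul (abs_nonneg u) _ _).symm
              have e2 : (|u| ^ (-γ)) ^ p = |u| ^ (-(γ * p)) := by
                rw [← Real.rpow_mul (abs_nonneg u), neg_mul]
              rcases max_choice (|u| ^ ((2 : ℝ) - γ)) (|u| ^ (-γ)) with hc | hc <;> rw [hc]
              · rw [e1]
                exact le_add_of_nonneg_right (Real.rpow_nonneg (abs_nonneg u) _)
              · rw [e2]
                exact le_add_of_nonneg_left (Real.rpow_nonneg (abs_nonneg u) _)
            have hexeq : Real.exp (3 * |x| / 2 * p) = Real.exp (3 * p / 2 * |x|) := by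
              congr 1; ring
            rw [hexeq, hh_def]
            have := mul_le_mul_of_nonneg_left hMp (Real.rpow_nonneg hC0.le p)
            exact mul_le_mul_of_nonneg_right this (Real.exp_pos _).le
  calc ∫ u, ((max (β ^ 2 * Real.exp x * u ^ 2) 1) /
          (β ^ γ * Real.exp (γ * x / 2) * |u| ^ γ)) ^ p ∂(gaussianReal 0 1)
      ≤ ∫ u, h u * Real.exp (3 * p / 2 * |x|) ∂(gaussianReal 0 1) := by
        refine integral_mono_of_nonneg (Filter.Eventually.of_forall fun u => ?_)
          (hinth.mul_const _) (Filter.Eventually.of_forall key)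
        refine Real.rpow_nonneg (div_nonneg ?_ ?_) p
        · exact le_trans zero_le_one (le_max_right _ _)
        · positivity
    _ = (∫ u, h u ∂(gaussianReal 0 1)) * Real.exp (3 * p / 2 * |x|) :=
        integral_mul_const _ _
end
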